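/- If G is the distribution function of the constant service time α, i.e. G(v) = 0 for v < α and G(v) = 1 for v ≥ α, so that h(t) = max(α − t, 0), then V(G) = (e^{2ρ} − 2ρe^ρ − 1)/λ². (The M/D/∞ busy period variance, with which both bounds of formula (1.3) coincide when γ_s = 0.) -/

import Mathlib

open MeasureTheory Real Set Filter

/-- The M/D/∞ busy period variance: for the constant service time `α`
(`G(v) = 0` for `v < α`, `G(v) = 1` for `v ≥ α`), `V(G) = (e^{2ρ} - 2ρe^ρ - 1)/λ²`. -/
theorem md_infty_busy_period_variance
    (G : ℝ → ℝ)
    (lam α ρ : ℝ)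
    (hlam : 0 < lam)
    (hα : 0 < α)
    (hρ : ρ = lam * α)
    (hG : ∀ v : ℝ, G v = if v < α then 0 else 1) :
    (2 * exp ρ / lam) * (∫ t in Ioi (0:ℝ), (exp (lam * ∫ v in Ioi t, (1 - G v)) - 1))
        - ((exp ρ - 1) / lam) ^ 2
      = (exp (2 * ρ) - 2 * ρ * exp ρ - 1) / lam ^ 2 := by
  -- inner integral
  have hfun : (fun v : ℝ => (1 : ℝ) - G v) = (Iio α).indicator (fun _ => (1:ℝ)) := by
    funext v
    by_cases hv : v < α <;> simp [hG, hv, Set.indicator_apply]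
  have hinner : ∀ t : ℝ, (∫ v in Ioi t, (1 - G v)) = max (α - t) 0 := by
    intro t
    rw [hfun, setIntegral_indicator measurableSet_Iio]
    rw [show Ioi t ∩ Iio α = Ioo t α from Set.Ioi_inter_Iio]
    simp [Real.volume_Ioo, ENNReal.toReal_ofReal']
  -- outer integrand as indicator
  have houter : ∀ t ∈ Ioi (0:ℝ),
      (exp (lam * ∫ v in Ioi t, (1 - G v)) - 1)
        = (Ioc (0:ℝ) α).indicator (fun t => exp (lam * (α - t)) - 1) t := by
    intro t ht
    rw [hinner]
    by_cases h : t ≤ α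
    · rw [max_eq_left (by linarith)]
      rw [Set.indicator_of_mem (by exact ⟨ht, h⟩)]
    · rw [max_eq_right (by linarith), Set.indicator_of_notMem (by simp [h])]
      simp
  have hIoi : (∫ t in Ioi (0:ℝ), (exp (lam * ∫ v in Ioi t, (1 - G v)) - 1))
      = ∫ t in Ioc (0:ℝ) α, (exp (lam * (α - t)) - 1) := by
    rw [setIntegral_congr_fun measurableSet_Ioi houter,
        setIntegral_indicator measurableSet_Ioc,
        show Ioi (0:ℝ) ∩ Ioc 0 α = Ioc 0 α by
          rw [Set.inter_eq_right]; exact Set.Ioc_subset_Ioi_self]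
  -- compute the interval integral
  have hexp : (∫ t in (0:ℝ)..α, exp (lam * (α - t))) = (exp ρ - 1) / lam := by
    have : ∀ t ∈ Set.uIcc (0:ℝ) α,
        HasDerivAt (fun t : ℝ => -exp (lam * (α - t)) / lam) (exp (lam * (α - t))) t := by
      intro t _
      have h1 : HasDerivAt (fun t : ℝ => lam * (α - t)) (-lam) t := by
        simpa using ((hasDerivAt_id t).const_sub α).const_mul lam
      have h2 := (h1.exp).neg.div_const lam
      have := hlam.ne'
      refine h2.congr_deriv ?_
      simp [this]
    rw [intervalIntegral.integral_eq_sub_of_hasDerivAt this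
        (by apply Continuous.intervalIntegrable; continuity)]
    rw [hρ]
    field_simp
    ring
    simp
  have hval : (∫ t in Ioc (0:ℝ) α, (exp (lam * (α - t)) - 1))
      = (exp ρ - 1) / lam - α := by
    rw [← intervalIntegral.integral_of_le hα.le]
    rw [intervalIntegral.integral_sub
        (by apply Continuous.intervalIntegrable; continuity)
        (intervalIntegrable_const)]
    rw [hexp]
    simp
  rw [hIoi, hval]
  have h2ρ : exp (2 * ρ) = exp ρ * exp ρ := by rw [two_mul, exp_add]
  rw [h2ρ, hρ]
  field_simp
  ring
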